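/- Let λ be the unique longest element of D_μ. Let w = Σ_{u ∈ D_μ} c_u e_u be a nonzero vector of V, let u₀ be an element of minimal length among those u with c_u ≠ 0, set ω = λ u₀⁻¹, and fix a reduced expression ω = s_{k₁} ⋯ s_{k_m}. Then U_{k₁} ∘ ⋯ ∘ U_{k_m}(w) = c_{u₀} · e_λ. In particular, every nonzero invariant subspace of V contains e_λ. -/

import Mathlib

open scoped Classical

noncomputable section

/-- The Coxeter length of a permutation of `Fin n`: its number of inversions. -/
def permLen {n : ℕ} (w : Equiv.Perm (Fin n)) : ℕ :=
  (Finset.univ.filter fun p : Fin n × Fin n => p.1 < p.2 ∧ w p.2 < w p.1).card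

/-- The partial sums (block offsets) of a composition `μ`. -/
def off (μ : ℕ → ℕ) (t : ℕ) : ℕ := ∑ s ∈ Finset.range t, μ s

/-- `p` and `q` lie in the same (consecutive) block of the composition
`(μ 0, …, μ (r-1))`. -/
def sameBlock (r : ℕ) (μ : ℕ → ℕ) (p q : ℕ) : Prop :=
  ∃ t < r, off μ t ≤ p ∧ p < off μ (t + 1) ∧ off μ t ≤ q ∧ q < off μ (t + 1)

/-- The set `D_μ` of minimal-length representatives of the left cosets `u • S_μ`:
permutations increasing on each block of `μ`. -/
def Dmu (n r : ℕ) (μ : ℕ → ℕ) : Set (Equiv.Perm (Fin n)) :=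
  {u | ∀ p q : Fin n, p < q → sameBlock r μ (p : ℕ) (q : ℕ) → u p < u q}

/-- The adjacent transposition `s_k = (k, k+1)` (0-indexed), as a permutation
of `Fin n` (junk value `1` if out of range). -/
def adjSwap (n k : ℕ) : Equiv.Perm (Fin n) :=
  if h : k + 1 < n then Equiv.swap ⟨k, Nat.lt_of_succ_lt h⟩ ⟨k + 1, h⟩ else 1

/-- The index type for the basis `{e_u : u ∈ D_μ}` of the vector space `V`. -/
abbrev DmuSub (n r : ℕ) (μ : ℕ → ℕ) : Type := {u : Equiv.Perm (Fin n) // u ∈ Dmu n r μ}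

/-- The defining property of the family of `K`-linear operators
`U_k : V → V` on `V = (DmuSub n r μ → K)`:
`U_k (e_u) = e_{s_k u}` if `ℓ(s_k u) = ℓ(u) + 1` and `s_k u ∈ D_μ`, and
`U_k (e_u) = 0` otherwise (here `e_u = Pi.single u 1`). -/
def IsUFamily (K : Type*) [Field K] (n r : ℕ) (μ : ℕ → ℕ)
    (U : ℕ → ((DmuSub n r μ → K) →ₗ[K] (DmuSub n r μ → K))) : Prop :=
  ∀ k, k + 1 < n → ∀ u : DmuSub n r μ,
    U k (Pi.single u (1 : K)) =
      if h : permLen (adjSwap n k * u.1) = permLen u.1 + 1 ∧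
          adjSwap n k * u.1 ∈ Dmu n r μ
      then Pi.single (⟨adjSwap n k * u.1, h.2⟩ : DmuSub n r μ) (1 : K) else 0

section Aux

variable {n r : ℕ} {μ : ℕ → ℕ}

/-- Generalized inversion count, restricted to pairs satisfying `Q`. -/
def cardInv (n : ℕ) (Q : Fin n × Fin n → Prop) (x : Equiv.Perm (Fin n)) : ℕ :=
  (Finset.univ.filter fun p : Fin n × Fin n => p.1 < p.2 ∧ Q p ∧ x p.2 < x p.1).card

lemma permLen_eq_cardInv (x : Equiv.Perm (Fin n)) :
    permLen x = cardInv n (fun _ => True) x := by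
  unfold permLen cardInv
  congr 1
  ext p
  simp only [Finset.mem_filter]
  tauto

/-- Number of cross-block inversions. -/
def clen (n r : ℕ) (μ : ℕ → ℕ) (x : Equiv.Perm (Fin n)) : ℕ :=
  cardInv n (fun p => ¬ sameBlock r μ (p.1 : ℕ) (p.2 : ℕ)) x

lemma adjSwap_val {k : ℕ} (hk : k + 1 < n) (y : Fin n) :
    ((adjSwap n k y : Fin n) : ℕ) =
      if (y : ℕ) = k then k + 1 else if (y : ℕ) = k + 1 then k else (y : ℕ) := by
  rw [adjSwap, dif_pos hk]
  rcases y with ⟨v, hv⟩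
  simp only [Equiv.swap_apply_def, Fin.ext_iff]
  split_ifs <;> simp_all

lemma adjSwap_mul_self {k : ℕ} (hk : k + 1 < n) :
    adjSwap n k * adjSwap n k = 1 := by
  rw [adjSwap, dif_pos hk, Equiv.swap_mul_self]

lemma adjSwap_lt_iff {k : ℕ} (hk : k + 1 < n) (x : Equiv.Perm (Fin n)) {i j : Fin n}
    (hij : i ≠ j)
    (h1 : ¬ ((x i : ℕ) = k ∧ (x j : ℕ) = k + 1))
    (h2 : ¬ ((x i : ℕ) = k + 1 ∧ (x j : ℕ) = k)) :
    ((adjSwap n k * x) j < (adjSwap n k * x) i ↔ x j < x i) := by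
  have hne : (x i : ℕ) ≠ (x j : ℕ) := by
    intro h
    exact hij (x.injective (Fin.ext h))
  have e1 := adjSwap_val hk (x i)
  have e2 := adjSwap_val hk (x j)
  simp only [Equiv.Perm.mul_apply, Fin.lt_def]
  split_ifs at e1 e2 <;> omega

lemma eq_of_apply_val_eq (x : Equiv.Perm (Fin n)) {i j : Fin n}
    (h : (x i : ℕ) = (x j : ℕ)) : i = j :=
  x.injective (Fin.ext h)

lemma not_special₁ {x : Equiv.Perm (Fin n)} {k : ℕ} {p q i j : Fin n}
    (hp : (x p : ℕ) = k) (hq : (x q : ℕ) = k + 1) (hcase : ¬ (i = p ∧ j = q)) :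
    ¬ ((x i : ℕ) = k ∧ (x j : ℕ) = k + 1) := by
  rintro ⟨ha, hb⟩
  exact hcase ⟨eq_of_apply_val_eq x (by omega), eq_of_apply_val_eq x (by omega)⟩

lemma not_special₂ {x : Equiv.Perm (Fin n)} {k : ℕ} {p q i j : Fin n}
    (hp : (x p : ℕ) = k) (hq : (x q : ℕ) = k + 1) (hcase : ¬ (i = q ∧ j = p)) :
    ¬ ((x i : ℕ) = k + 1 ∧ (x j : ℕ) = k) := by
  rintro ⟨ha, hb⟩
  exact hcase ⟨eq_of_apply_val_eq x (by omega), eq_of_apply_val_eq x (by omega)⟩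

/-- Toggle lemma, case `p < q`: left multiplication by `s_k` creates one new
`Q`-inversion. -/
lemma cardInv_adjSwap_lt {k : ℕ} (hk : k + 1 < n) (Q : Fin n × Fin n → Prop)
    (x : Equiv.Perm (Fin n)) {p q : Fin n}
    (hp : (x p : ℕ) = k) (hq : (x q : ℕ) = k + 1)
    (hpq : p < q) (hQpq : Q (p, q)) :
    cardInv n Q (adjSwap n k * x) = cardInv n Q x + 1 := by
  classical
  have hsp : (((adjSwap n k * x) p : Fin n) : ℕ) = k + 1 := by
    rw [Equiv.Perm.mul_apply, adjSwap_val hk, hp]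
    simp
  have hsq : (((adjSwap n k * x) q : Fin n) : ℕ) = k := by
    rw [Equiv.Perm.mul_apply, adjSwap_val hk, hq]
    simp
  have key : (Finset.univ.filter fun pr : Fin n × Fin n =>
      pr.1 < pr.2 ∧ Q pr ∧ (adjSwap n k * x) pr.2 < (adjSwap n k * x) pr.1)
      = insert (p, q) (Finset.univ.filter fun pr : Fin n × Fin n =>
        pr.1 < pr.2 ∧ Q pr ∧ x pr.2 < x pr.1) := by
    ext ⟨i, j⟩
    simp only [Finset.mem_insert, Finset.mem_filter, Finset.mem_univ, true_and,
      Prod.mk.injEq]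
    constructor
    · rintro ⟨hij, hQij, hlt⟩
      by_cases hcase : i = p ∧ j = q
      · exact Or.inl hcase
      · right
        refine ⟨hij, hQij, ?_⟩
        by_cases hcase2 : i = q ∧ j = p
        · obtain ⟨rfl, rfl⟩ := hcase2
          exact absurd hpq (lt_asymm hij)
        · rw [← adjSwap_lt_iff hk x (ne_of_lt hij)
            (not_special₁ hp hq hcase) (not_special₂ hp hq hcase2)]
          exact hlt
    · rintro (⟨rfl, rfl⟩ | ⟨hij, hQij, hlt⟩)
      · exact ⟨hpq, hQpq, by rw [Fin.lt_def]; omega⟩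
      · refine ⟨hij, hQij, ?_⟩
        by_cases hcase : i = p ∧ j = q
        · obtain ⟨rfl, rfl⟩ := hcase
          rw [Fin.lt_def] at hlt
          omega
        · by_cases hcase2 : i = q ∧ j = p
          · obtain ⟨rfl, rfl⟩ := hcase2
            exact absurd hpq (lt_asymm hij)
          · rw [adjSwap_lt_iff hk x (ne_of_lt hij)
              (not_special₁ hp hq hcase) (not_special₂ hp hq hcase2)]
            exact hlt
  unfold cardInv
  rw [key, Finset.card_insert_of_notMem]
  simp only [Finset.mem_filter, Finset.mem_univ, true_and, not_and]
  intro _ _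
  rw [Fin.lt_def]
  omega

/-- Toggle lemma, case `q < p`: left multiplication by `s_k` removes one
`Q`-inversion. -/
lemma cardInv_adjSwap_gt {k : ℕ} (hk : k + 1 < n) (Q : Fin n × Fin n → Prop)
    (x : Equiv.Perm (Fin n)) {p q : Fin n}
    (hp : (x p : ℕ) = k) (hq : (x q : ℕ) = k + 1)
    (hqp : q < p) (hQqp : Q (q, p)) :
    cardInv n Q (adjSwap n k * x) + 1 = cardInv n Q x := by
  have hs : adjSwap n k * (adjSwap n k * x) = x := by
    rw [← mul_assoc, adjSwap_mul_self hk, one_mul]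
  have h1 : (((adjSwap n k * x) q : Fin n) : ℕ) = k := by
    rw [Equiv.Perm.mul_apply, adjSwap_val hk, hq]
    simp
  have h2 : (((adjSwap n k * x) p : Fin n) : ℕ) = k + 1 := by
    rw [Equiv.Perm.mul_apply, adjSwap_val hk, hp]
    simp
  have := cardInv_adjSwap_lt hk Q (adjSwap n k * x) h1 h2 hqp hQqp
  rw [hs] at this
  omega

/-- Toggle lemma, case where the toggled pair does not satisfy `Q`. -/
lemma cardInv_adjSwap_same {k : ℕ} (hk : k + 1 < n) (Q : Fin n × Fin n → Prop)
    (x : Equiv.Perm (Fin n)) {p q : Fin n}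
    (hp : (x p : ℕ) = k) (hq : (x q : ℕ) = k + 1)
    (hQ1 : ¬ Q (p, q)) (hQ2 : ¬ Q (q, p)) :
    cardInv n Q (adjSwap n k * x) = cardInv n Q x := by
  classical
  unfold cardInv
  congr 1
  apply Finset.filter_congr
  rintro ⟨i, j⟩ _
  simp only
  by_cases hij : i < j
  · by_cases hcase : i = p ∧ j = q
    · obtain ⟨rfl, rfl⟩ := hcase
      tauto
    · by_cases hcase2 : i = q ∧ j = p
      · obtain ⟨rfl, rfl⟩ := hcase2
        tauto
      · rw [adjSwap_lt_iff hk x (ne_of_lt hij)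
          (not_special₁ hp hq hcase) (not_special₂ hp hq hcase2)]
  · tauto

lemma sameBlock_symm {p q : ℕ} (h : sameBlock r μ p q) : sameBlock r μ q p := by
  obtain ⟨t, ht, h1, h2, h3, h4⟩ := h
  exact ⟨t, ht, h3, h4, h1, h2⟩

lemma off_mono : Monotone (off μ) := fun a b hab =>
  Finset.sum_le_sum_of_subset (Finset.range_subset_range.2 hab)

lemma sameBlock_trans {p a q : ℕ} (h1 : sameBlock r μ p a) (h2 : sameBlock r μ a q) :
    sameBlock r μ p q := by
  obtain ⟨t, ht, hp1, hp2, ha1, ha2⟩ := h1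
  obtain ⟨t', ht', ha1', ha2', hq1, hq2⟩ := h2
  have : t = t' := by
    rcases Nat.lt_trichotomy t t' with h | h | h
    · have := off_mono (μ := μ) (show t + 1 ≤ t' from h)
      omega
    · exact h
    · have := off_mono (μ := μ) (show t' + 1 ≤ t from h)
      omega
  subst this
  exact ⟨t, ht, hp1, hp2, hq1, hq2⟩

lemma permLen_adjSwap_lt {k : ℕ} (hk : k + 1 < n) (x : Equiv.Perm (Fin n)) {p q : Fin n}
    (hp : (x p : ℕ) = k) (hq : (x q : ℕ) = k + 1) (hpq : p < q) :
    permLen (adjSwap n k * x) = permLen x + 1 := by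
  rw [permLen_eq_cardInv, permLen_eq_cardInv]
  exact cardInv_adjSwap_lt hk _ x hp hq hpq trivial

lemma permLen_adjSwap_gt {k : ℕ} (hk : k + 1 < n) (x : Equiv.Perm (Fin n)) {p q : Fin n}
    (hp : (x p : ℕ) = k) (hq : (x q : ℕ) = k + 1) (hqp : q < p) :
    permLen (adjSwap n k * x) + 1 = permLen x := by
  rw [permLen_eq_cardInv, permLen_eq_cardInv]
  exact cardInv_adjSwap_gt hk _ x hp hq hqp trivial

lemma Dmu_mul_adjSwap {k : ℕ} (hk : k + 1 < n) {x : Equiv.Perm (Fin n)}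
    (hx : x ∈ Dmu n r μ) {p q : Fin n}
    (hp : (x p : ℕ) = k) (hq : (x q : ℕ) = k + 1)
    (hcross : ¬ sameBlock r μ (p : ℕ) (q : ℕ)) :
    adjSwap n k * x ∈ Dmu n r μ := by
  intro i j hij hblk
  have h1 : ¬ (j = p ∧ i = q) := by
    rintro ⟨rfl, rfl⟩
    exact hcross (sameBlock_symm hblk)
  have h2 : ¬ (j = q ∧ i = p) := by
    rintro ⟨rfl, rfl⟩
    exact hcross hblk
  rw [adjSwap_lt_iff hk x (ne_of_gt hij) (not_special₁ hp hq h1) (not_special₂ hp hq h2)]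
  exact hx i j hij hblk

lemma clen_adjSwap_le {k : ℕ} (hk : k + 1 < n) (x : Equiv.Perm (Fin n)) :
    clen n r μ (adjSwap n k * x) ≤ clen n r μ x + 1 := by
  set p := x⁻¹ ⟨k, Nat.lt_of_succ_lt hk⟩ with hpdef
  set q := x⁻¹ ⟨k + 1, hk⟩ with hqdef
  have hp : (x p : ℕ) = k := by rw [hpdef, ← Equiv.Perm.mul_apply, mul_inv_cancel, Equiv.Perm.one_apply]
  have hq : (x q : ℕ) = k + 1 := by rw [hqdef, ← Equiv.Perm.mul_apply, mul_inv_cancel, Equiv.Perm.one_apply]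
  have hne : p ≠ q := by
    intro h
    rw [h] at hp
    omega
  by_cases hsb : sameBlock r μ (p : ℕ) (q : ℕ)
  · have := cardInv_adjSwap_same hk (fun pr => ¬ sameBlock r μ (pr.1 : ℕ) (pr.2 : ℕ)) x hp hq (by simpa using hsb) (by simpa using sameBlock_symm hsb)
    unfold clen
    omega
  · rcases lt_or_gt_of_ne hne with h | h
    · have := cardInv_adjSwap_lt hk (fun pr => ¬ sameBlock r μ (pr.1 : ℕ) (pr.2 : ℕ)) x hp hq h hsb
      unfold clen
      omega
    · have := cardInv_adjSwap_gt hk (fun pr => ¬ sameBlock r μ (pr.1 : ℕ) (pr.2 : ℕ)) x hp hq h (fun hh => hsb (sameBlock_symm hh))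
      unfold clen
      omega

/-- If left multiplication by `s_k` increases the cross-inversion count of an
element of `D_μ`, then the result is in `D_μ` and its Coxeter length goes up
by one. -/
lemma step_of_clen_succ {k : ℕ} (hk : k + 1 < n) {x : Equiv.Perm (Fin n)}
    (hx : x ∈ Dmu n r μ)
    (hstep : clen n r μ (adjSwap n k * x) = clen n r μ x + 1) :
    adjSwap n k * x ∈ Dmu n r μ ∧ permLen (adjSwap n k * x) = permLen x + 1 := by
  set p := x⁻¹ ⟨k, Nat.lt_of_succ_lt hk⟩ with hpdef
  set q := x⁻¹ ⟨k + 1, hk⟩ with hqdef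
  have hp : (x p : ℕ) = k := by rw [hpdef, ← Equiv.Perm.mul_apply, mul_inv_cancel, Equiv.Perm.one_apply]
  have hq : (x q : ℕ) = k + 1 := by rw [hqdef, ← Equiv.Perm.mul_apply, mul_inv_cancel, Equiv.Perm.one_apply]
  have hne : p ≠ q := by
    intro h
    rw [h] at hp
    omega
  by_cases hsb : sameBlock r μ (p : ℕ) (q : ℕ)
  · exfalso
    have := cardInv_adjSwap_same hk (fun pr => ¬ sameBlock r μ (pr.1 : ℕ) (pr.2 : ℕ)) x hp hq (by simpa using hsb) (by simpa using sameBlock_symm hsb)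
    unfold clen at hstep
    omega
  · rcases lt_or_gt_of_ne hne with h | h
    · exact ⟨Dmu_mul_adjSwap hk hx hp hq hsb, permLen_adjSwap_lt hk x hp hq h⟩
    · exfalso
      have := cardInv_adjSwap_gt hk (fun pr => ¬ sameBlock r μ (pr.1 : ℕ) (pr.2 : ℕ)) x hp hq h (fun hh => hsb (sameBlock_symm hh))
      unfold clen at hstep
      omega

/-- On `D_μ`, the Coxeter length equals the cross-inversion count. -/
lemma permLen_eq_clen {x : Equiv.Perm (Fin n)} (hx : x ∈ Dmu n r μ) :
    permLen x = clen n r μ x := by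
  unfold permLen clen cardInv
  congr 1
  ext ⟨i, j⟩
  simp only [Finset.mem_filter, Finset.mem_univ, true_and]
  constructor
  · rintro ⟨hij, hlt⟩
    refine ⟨hij, ?_, hlt⟩
    intro hsb
    exact absurd (hx i j hij hsb) (not_lt_of_gt hlt)
  · tauto

lemma clen_prod_le (L : List ℕ) (hL : ∀ k ∈ L, k + 1 < n) (x : Equiv.Perm (Fin n)) :
    clen n r μ ((L.map (adjSwap n)).prod * x) ≤ clen n r μ x + L.length := by
  induction L with
  | nil => simp
  | cons k L' ih =>
    have hk : k + 1 < n := hL k (List.mem_cons_self)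
    have ih' := ih (fun j hj => hL j (List.mem_cons_of_mem k hj))
    rw [List.map_cons, List.prod_cons, mul_assoc]
    calc clen n r μ (adjSwap n k * ((L'.map (adjSwap n)).prod * x))
        ≤ clen n r μ ((L'.map (adjSwap n)).prod * x) + 1 := clen_adjSwap_le hk _
      _ ≤ clen n r μ x + L'.length + 1 := by omega
      _ = clen n r μ x + (k :: L').length := by simp only [List.length_cons]; omega

/-- The unique longest element of `D_μ` inverts every cross-block pair. -/
lemma lam_cross_inverted {lam : Equiv.Perm (Fin n)} (hlam : lam ∈ Dmu n r μ)
    (hmax : ∀ u ∈ Dmu n r μ, u ≠ lam → permLen u < permLen lam) :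
    ∀ p q : Fin n, p < q → ¬ sameBlock r μ (p : ℕ) (q : ℕ) → lam q < lam p := by
  classical
  by_contra hbad
  push_neg at hbad
  obtain ⟨p₀, q₀, hpq₀, hcross₀, hge₀⟩ := hbad
  set Bad : Finset (Fin n × Fin n) := Finset.univ.filter
    (fun pr => pr.1 < pr.2 ∧ ¬ sameBlock r μ (pr.1 : ℕ) (pr.2 : ℕ) ∧ lam pr.1 < lam pr.2)
    with hBad
  have hne : Bad.Nonempty := by
    refine ⟨(p₀, q₀), ?_⟩
    simp only [hBad, Finset.mem_filter, Finset.mem_univ, true_and]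
    exact ⟨hpq₀, hcross₀,
      lt_of_le_of_ne hge₀ (fun h => (ne_of_lt hpq₀) (lam.injective h))⟩
  obtain ⟨⟨p, q⟩, hmem, hminim⟩ :=
    Finset.exists_min_image Bad (fun pr => (lam pr.2 : ℕ) - (lam pr.1 : ℕ)) hne
  rw [hBad, Finset.mem_filter] at hmem
  obtain ⟨-, hpq, hcross, hlt⟩ := hmem
  have hltv : (lam p : ℕ) < (lam q : ℕ) := hlt
  have hgap : (lam q : ℕ) = (lam p : ℕ) + 1 := by
    by_contra hgap
    have h1 : (lam p : ℕ) + 1 < (lam q : ℕ) := by omega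
    set c : Fin n := ⟨(lam p : ℕ) + 1, lt_trans h1 (lam q).isLt⟩ with hc
    set a := lam⁻¹ c with ha
    have hla : (lam a : ℕ) = (lam p : ℕ) + 1 := by
      rw [ha, ← Equiv.Perm.mul_apply, mul_inv_cancel, Equiv.Perm.one_apply]
    have hap : a ≠ p := fun h => by rw [h] at hla; omega
    have haq : a ≠ q := fun h => by rw [h] at hla; omega
    have hlpa : lam p < lam a := by rw [Fin.lt_def]; omega
    have hlaq : lam a < lam q := by rw [Fin.lt_def]; omega
    have hminlt : ∀ i j : Fin n, i < j → ¬ sameBlock r μ (i : ℕ) (j : ℕ) →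
        lam i < lam j → (lam q : ℕ) - (lam p : ℕ) ≤ (lam j : ℕ) - (lam i : ℕ) := by
      intro i j h1' h2' h3'
      exact hminim (i, j) (by simp [hBad, h1', h2', h3'])
    by_cases hpa : sameBlock r μ (p : ℕ) (a : ℕ)
    · have hpa' : p < a := by
        rcases lt_trichotomy p a with h | h | h
        · exact h
        · exact absurd h.symm hap
        · exact absurd (hlam a p h (sameBlock_symm hpa)) (not_lt_of_gt hlpa)
      have hnaq : ¬ sameBlock r μ (a : ℕ) (q : ℕ) := fun h => hcross (sameBlock_trans hpa h)
      have haq' : a < q := by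
        rcases lt_trichotomy a q with h | h | h
        · exact h
        · exact absurd h haq
        · exfalso
          obtain ⟨t, ht, h1', h2', h3', h4'⟩ := hpa
          rw [Fin.lt_def] at hpq h
          exact hcross ⟨t, ht, h1', h2', le_trans h1' (le_of_lt hpq), lt_trans h h4'⟩
      have hla2 : (lam a : ℕ) < (lam q : ℕ) := hlaq
      have := hminlt a q haq' hnaq hlaq
      omega
    · by_cases haq2 : sameBlock r μ (a : ℕ) (q : ℕ)
      · have haq' : a < q := by
          rcases lt_trichotomy a q with h | h | h
          · exact h
          · exact absurd h haq
          · exact absurd (hlam q a h (sameBlock_symm haq2)) (not_lt_of_gt hlaq)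
        have hpa' : p < a := by
          rcases lt_trichotomy p a with h | h | h
          · exact h
          · exact absurd h.symm hap
          · exfalso
            obtain ⟨t, ht, h1', h2', h3', h4'⟩ := haq2
            rw [Fin.lt_def] at hpq h
            exact hcross ⟨t, ht, le_trans h1' (le_of_lt h), lt_trans hpq h4', h3', h4'⟩
        have := hminlt p a hpa' hpa hlpa
        omega
      · rcases lt_trichotomy p a with h | h | h
        · have := hminlt p a h hpa hlpa
          omega
        · exact absurd h.symm hap
        · have haq' : a < q := lt_trans h hpq
          have := hminlt a q haq' haq2 hlaq
          omega
  set k := (lam p : ℕ) with hkdef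
  have hk : k + 1 < n := by
    have := (lam q).isLt
    omega
  have hDmu2 : adjSwap n k * lam ∈ Dmu n r μ := Dmu_mul_adjSwap hk hlam rfl hgap hcross
  have hlen2 : permLen (adjSwap n k * lam) = permLen lam + 1 :=
    permLen_adjSwap_lt hk lam rfl hgap hpq
  have hne2 : adjSwap n k * lam ≠ lam := by
    intro h
    have h2 : ((adjSwap n k * lam) p : ℕ) = k + 1 := by
      rw [Equiv.Perm.mul_apply, adjSwap_val hk, if_pos rfl]
    rw [h] at h2
    omega
  have := hmax _ hDmu2 hne2
  omega

/-- Key length decomposition: `ℓ(λ) = ℓ(λ u⁻¹) + ℓ(u)` for `u ∈ D_μ`. -/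
lemma permLen_lam_decomp {lam : Equiv.Perm (Fin n)} (hlam : lam ∈ Dmu n r μ)
    (hX : ∀ p q : Fin n, p < q → ¬ sameBlock r μ (p : ℕ) (q : ℕ) → lam q < lam p)
    {u : Equiv.Perm (Fin n)} (hu : u ∈ Dmu n r μ) :
    permLen lam = permLen (lam * u⁻¹) + permLen u := by
  classical
  set Cross : Finset (Fin n × Fin n) := Finset.univ.filter
    (fun pr => pr.1 < pr.2 ∧ ¬ sameBlock r μ (pr.1 : ℕ) (pr.2 : ℕ)) with hCross
  have key : ∀ p q : Fin n, u p < u q → lam q < lam p →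
      (p < q ∧ ¬ sameBlock r μ (p : ℕ) (q : ℕ)) := by
    intro p q hu' hl'
    have hne : p ≠ q := fun h => by rw [h] at hl'; exact lt_irrefl _ hl'
    by_cases hsb : sameBlock r μ (p : ℕ) (q : ℕ)
    · rcases lt_or_gt_of_ne hne with h | h
      · exact absurd (hlam p q h hsb) (not_lt_of_gt hl')
      · exact absurd (hu q p h (sameBlock_symm hsb)) (not_lt_of_gt hu')
    · rcases lt_or_gt_of_ne hne with h | h
      · exact ⟨h, hsb⟩
      · exact absurd (hX q p h (fun hh => hsb (sameBlock_symm hh))) (not_lt_of_gt hl')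
  have h1 : permLen lam = Cross.card := by
    unfold permLen
    congr 1
    ext ⟨i, j⟩
    simp only [hCross, Finset.mem_filter, Finset.mem_univ, true_and]
    constructor
    · rintro ⟨hij, hlt⟩
      exact ⟨hij, fun hsb => absurd (hlam i j hij hsb) (not_lt_of_gt hlt)⟩
    · rintro ⟨hij, hsb⟩
      exact ⟨hij, hX i j hij hsb⟩
  have h2 : permLen (lam * u⁻¹) =
      (Cross.filter (fun pr => u pr.1 < u pr.2)).card := by
    unfold permLen
    refine Finset.card_bij' (fun pr _ => (u⁻¹ pr.1, u⁻¹ pr.2))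
      (fun pr _ => (u pr.1, u pr.2)) ?_ ?_ ?_ ?_
    · rintro ⟨a, b⟩ hab
      simp only [Finset.mem_filter, Finset.mem_univ, true_and] at hab
      obtain ⟨hab1, hab2⟩ := hab
      have h3 : u (u⁻¹ a) < u (u⁻¹ b) := by simpa using hab1
      have h4 : lam (u⁻¹ b) < lam (u⁻¹ a) := by
        simpa [Equiv.Perm.mul_apply] using hab2
      obtain ⟨h5, h6⟩ := key _ _ h3 h4
      simp only [hCross, Finset.mem_filter, Finset.mem_univ, true_and]
      exact ⟨⟨h5, h6⟩, h3⟩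
    · rintro ⟨p, q⟩ hpq
      simp only [hCross, Finset.mem_filter, Finset.mem_univ, true_and] at hpq
      obtain ⟨⟨h5, h6⟩, h7⟩ := hpq
      simp only [Finset.mem_filter, Finset.mem_univ, true_and]
      refine ⟨h7, ?_⟩
      have := hX p q h5 h6
      simpa [Equiv.Perm.mul_apply] using this
    · rintro ⟨a, b⟩ _
      simp
    · rintro ⟨p, q⟩ _
      simp
  have h3 : permLen u = (Cross.filter (fun pr => ¬ u pr.1 < u pr.2)).card := by
    rw [permLen_eq_clen hu]
    unfold clen cardInv
    congr 1
    ext ⟨i, j⟩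
    simp only [hCross, Finset.mem_filter, Finset.mem_univ, true_and]
    constructor
    · rintro ⟨hij, hsb, hlt⟩
      exact ⟨⟨hij, hsb⟩, not_lt_of_gt hlt⟩
    · rintro ⟨⟨hij, hsb⟩, hnlt⟩
      refine ⟨hij, hsb, ?_⟩
      rcases lt_or_gt_of_ne (fun h : u i = u j => (ne_of_lt hij) (u.injective h)) with h | h
      · exact absurd h hnlt
      · exact h
  have h4 := Finset.card_filter_add_card_filter_not
    (s := Cross) (p := fun pr => u pr.1 < u pr.2)
  omega

lemma permLen_one : permLen (1 : Equiv.Perm (Fin n)) = 0 := by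
  rw [permLen, Finset.card_eq_zero, Finset.filter_eq_empty_iff]
  rintro ⟨i, j⟩ -
  simp only [Equiv.Perm.one_apply, not_and]
  exact fun h => not_lt_of_gt h

lemma eq_one_of_permLen_zero {x : Equiv.Perm (Fin n)} (hx : permLen x = 0) : x = 1 := by
  have hmono : StrictMono x := by
    intro i j hij
    rcases lt_trichotomy (x i) (x j) with h | h | h
    · exact h
    · exact absurd (x.injective h) (ne_of_lt hij)
    · exfalso
      rw [permLen, Finset.card_eq_zero] at hx
      have hm : (i, j) ∈
          (Finset.univ.filter fun p : Fin n × Fin n => p.1 < p.2 ∧ x p.2 < x p.1) := by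
        simp only [Finset.mem_filter, Finset.mem_univ, true_and]
        exact ⟨hij, h⟩
      rw [hx] at hm
      exact absurd hm (Finset.notMem_empty _)
  have hrange : Set.range ⇑x = Set.range (id : Fin n → Fin n) := by
    rw [Set.range_id]
    exact x.surjective.range_eq
  haveI : WellFoundedLT (Fin n) := inferInstance
  have hid := (StrictMono.range_inj hmono strictMono_id).1 hrange
  exact Equiv.ext (fun i => congrFun hid i)

lemma exists_adj_descent {x : Equiv.Perm (Fin n)} {a b : Fin n} (hab : a < b)
    (hinv : x⁻¹ b < x⁻¹ a) :
    ∃ k, ∃ hk : k + 1 < n, x⁻¹ ⟨k + 1, hk⟩ < x⁻¹ ⟨k, Nat.lt_of_succ_lt hk⟩ := by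
  by_contra hcon
  push_neg at hcon
  have hlt : ∀ k (hk : k + 1 < n),
      x⁻¹ ⟨k, Nat.lt_of_succ_lt hk⟩ < x⁻¹ ⟨k + 1, hk⟩ := by
    intro k hk
    refine lt_of_le_of_ne (hcon k hk) ?_
    intro e
    have h2 : (⟨k, Nat.lt_of_succ_lt hk⟩ : Fin n) = ⟨k + 1, hk⟩ := (x⁻¹).injective e
    simp only [Fin.mk.injEq] at h2
    omega
  have chain : ∀ d : ℕ, ∀ ha : (a : ℕ) + d < n, x⁻¹ a ≤ x⁻¹ ⟨(a : ℕ) + d, ha⟩ := by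
    intro d
    induction d with
    | zero =>
      intro ha
      have he : (⟨(a : ℕ) + 0, ha⟩ : Fin n) = a := Fin.ext (by simp)
      rw [he]
    | succ d ih =>
      intro ha
      have h1 : (a : ℕ) + d < n := by omega
      exact le_trans (ih h1) (le_of_lt (hlt ((a : ℕ) + d) ha))
  have hb : (a : ℕ) + ((b : ℕ) - (a : ℕ)) < n := by
    have := b.isLt
    have := Fin.lt_def.mp hab
    omega
  have hchain := chain ((b : ℕ) - (a : ℕ)) hb
  have heq : (⟨(a : ℕ) + ((b : ℕ) - (a : ℕ)), hb⟩ : Fin n) = b := by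
    apply Fin.ext
    have := Fin.lt_def.mp hab
    simp only
    omega
  rw [heq] at hchain
  exact absurd hinv (not_lt_of_ge hchain)

/-- Every permutation of `Fin n` has a reduced word in adjacent transpositions. -/
lemma exists_word (N : ℕ) : ∀ x : Equiv.Perm (Fin n), permLen x ≤ N →
    ∃ L : List ℕ, (∀ k ∈ L, k + 1 < n) ∧ (L.map (adjSwap n)).prod = x ∧
      L.length = permLen x := by
  induction N with
  | zero =>
    intro x hx
    have h0 : permLen x = 0 := Nat.le_zero.mp hx
    refine ⟨[], by simp, ?_, by simp [h0]⟩
    simp [eq_one_of_permLen_zero h0]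
  | succ N ih =>
    intro x hx
    by_cases h0 : permLen x = 0
    · refine ⟨[], by simp, ?_, by simp [h0]⟩
      simp [eq_one_of_permLen_zero h0]
    · have hpos : 0 < (Finset.univ.filter
          fun p : Fin n × Fin n => p.1 < p.2 ∧ x p.2 < x p.1).card :=
        Nat.pos_of_ne_zero h0
      obtain ⟨⟨i, j⟩, hmem⟩ := Finset.card_pos.mp hpos
      rw [Finset.mem_filter] at hmem
      obtain ⟨-, hij, hinv⟩ := hmem
      have hinv' : x⁻¹ (x i) < x⁻¹ (x j) := by simpa using hij
      obtain ⟨k, hk, hdesc⟩ := exists_adj_descent hinv hinv'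
      have hp : (x (x⁻¹ ⟨k, Nat.lt_of_succ_lt hk⟩) : ℕ) = k := by
        rw [← Equiv.Perm.mul_apply, mul_inv_cancel, Equiv.Perm.one_apply]
      have hq : (x (x⁻¹ ⟨k + 1, hk⟩) : ℕ) = k + 1 := by
        rw [← Equiv.Perm.mul_apply, mul_inv_cancel, Equiv.Perm.one_apply]
      have hlen := permLen_adjSwap_gt hk x hp hq hdesc
      have hle : permLen (adjSwap n k * x) ≤ N := by omega
      obtain ⟨L', hL'k, hL'prod, hL'len⟩ := ih (adjSwap n k * x) hle
      refine ⟨k :: L', ?_, ?_, ?_⟩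
      · intro j' hj'
        rcases List.mem_cons.mp hj' with h | h
        · rw [h]; exact hk
        · exact hL'k j' h
      · rw [List.map_cons, List.prod_cons, hL'prod, ← mul_assoc, adjSwap_mul_self hk,
          one_mul]
      · simp only [List.length_cons, hL'len]
        omega

end Aux

section Ops

variable {K : Type*} [Field K] {n r : ℕ} {μ : ℕ → ℕ}
variable {U : ℕ → ((DmuSub n r μ → K) →ₗ[K] (DmuSub n r μ → K))}

lemma foldr_zero (L : List ℕ) :
    L.foldr (fun k v => U k v) (0 : DmuSub n r μ → K) = 0 := by
  induction L with
  | nil => rfl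
  | cons k L' ih => simp only [List.foldr_cons, ih, map_zero]

lemma foldr_add (L : List ℕ) (v w : DmuSub n r μ → K) :
    L.foldr (fun k v => U k v) (v + w) =
      L.foldr (fun k v => U k v) v + L.foldr (fun k v => U k v) w := by
  induction L with
  | nil => rfl
  | cons k L' ih => simp only [List.foldr_cons, ih, map_add]

lemma foldr_smul (L : List ℕ) (c : K) (v : DmuSub n r μ → K) :
    L.foldr (fun k v => U k v) (c • v) = c • L.foldr (fun k v => U k v) v := by
  induction L with
  | nil => rfl
  | cons k L' ih => simp only [List.foldr_cons, ih, map_smul]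

lemma foldr_sum {α : Type*} (L : List ℕ) (s : Finset α) (f : α → (DmuSub n r μ → K)) :
    L.foldr (fun k v => U k v) (∑ a ∈ s, f a) =
      ∑ a ∈ s, L.foldr (fun k v => U k v) (f a) := by
  classical
  induction s using Finset.induction with
  | empty => simp [foldr_zero]
  | insert a s hmem ih =>
    rw [Finset.sum_insert hmem, Finset.sum_insert hmem, foldr_add, ih]

/-- The chain lemma: if the cross-inversion count of `prod L * u` is maximal
possible, the foldr of the `U`'s takes `e_u` to `e_{prod L * u}`. -/
lemma chain_fold (hU : IsUFamily K n r μ U) :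
    ∀ L : List ℕ, (∀ k ∈ L, k + 1 < n) → ∀ u : DmuSub n r μ,
      clen n r μ ((L.map (adjSwap n)).prod * u.1) = clen n r μ u.1 + L.length →
      ∃ h : (L.map (adjSwap n)).prod * u.1 ∈ Dmu n r μ,
        permLen ((L.map (adjSwap n)).prod * u.1) = permLen u.1 + L.length ∧
        L.foldr (fun k v => U k v) (Pi.single u (1 : K)) =
          Pi.single (⟨(L.map (adjSwap n)).prod * u.1, h⟩ : DmuSub n r μ) (1 : K) := by
  intro L
  induction L with
  | nil =>
    intro _ u _
    have hm : (List.map (adjSwap n) ([] : List ℕ)).prod * u.1 ∈ Dmu n r μ := by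
      simpa using u.2
    refine ⟨hm, by simp, ?_⟩
    rw [List.foldr_nil]
    exact congrArg (fun z => Pi.single z (1 : K))
      (Subtype.ext (by simp) : u = (⟨_, hm⟩ : DmuSub n r μ))
  | cons k L' ih =>
    intro hLk u hcl
    have hk : k + 1 < n := hLk k (List.mem_cons_self)
    have hL' : ∀ j ∈ L', j + 1 < n := fun j hj => hLk j (List.mem_cons_of_mem k hj)
    have hassoc : ((k :: L').map (adjSwap n)).prod * u.1 =
        adjSwap n k * ((L'.map (adjSwap n)).prod * u.1) := by
      rw [List.map_cons, List.prod_cons, mul_assoc]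
    have h1 : clen n r μ ((L'.map (adjSwap n)).prod * u.1) ≤ clen n r μ u.1 + L'.length :=
      clen_prod_le L' hL' u.1
    have h2 : clen n r μ (adjSwap n k * ((L'.map (adjSwap n)).prod * u.1)) ≤
        clen n r μ ((L'.map (adjSwap n)).prod * u.1) + 1 := clen_adjSwap_le hk _
    rw [hassoc] at hcl
    simp only [List.length_cons] at hcl
    have hcl' : clen n r μ ((L'.map (adjSwap n)).prod * u.1) =
        clen n r μ u.1 + L'.length := by omega
    obtain ⟨hmem', hlen', hfold'⟩ := ih hL' u hcl'
    have hstep : clen n r μ (adjSwap n k * ((L'.map (adjSwap n)).prod * u.1)) =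
        clen n r μ ((L'.map (adjSwap n)).prod * u.1) + 1 := by omega
    obtain ⟨hmem2, hlen2⟩ := step_of_clen_succ hk hmem' hstep
    have hmemK : ((k :: L').map (adjSwap n)).prod * u.1 ∈ Dmu n r μ := by
      rw [hassoc]; exact hmem2
    refine ⟨hmemK, ?_, ?_⟩
    · rw [hassoc, hlen2, hlen']
      simp only [List.length_cons]
      omega
    · simp only [List.foldr_cons]
      rw [hfold', hU k hk ⟨(L'.map (adjSwap n)).prod * u.1, hmem'⟩,
        dif_pos (⟨hlen2, hmem2⟩ :
          permLen (adjSwap n k * ((L'.map (adjSwap n)).prod * u.1)) =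
            permLen ((L'.map (adjSwap n)).prod * u.1) + 1 ∧
          adjSwap n k * ((L'.map (adjSwap n)).prod * u.1) ∈ Dmu n r μ)]
      exact congrArg (fun z => Pi.single z (1 : K))
        (Subtype.ext hassoc.symm :
          (⟨_, hmem2⟩ : DmuSub n r μ) = (⟨_, hmemK⟩ : DmuSub n r μ))

/-- The collapse lemma: foldr of the `U`'s takes a basis vector either to `0`
or to the expected basis vector. -/
lemma collapse_fold (hU : IsUFamily K n r μ U) :
    ∀ L : List ℕ, (∀ k ∈ L, k + 1 < n) → ∀ u : DmuSub n r μ,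
      L.foldr (fun k v => U k v) (Pi.single u (1 : K)) = 0 ∨
      ∃ h : (L.map (adjSwap n)).prod * u.1 ∈ Dmu n r μ,
        permLen ((L.map (adjSwap n)).prod * u.1) = permLen u.1 + L.length ∧
        L.foldr (fun k v => U k v) (Pi.single u (1 : K)) =
          Pi.single (⟨(L.map (adjSwap n)).prod * u.1, h⟩ : DmuSub n r μ) (1 : K) := by
  intro L
  induction L with
  | nil =>
    intro _ u
    right
    have hm : (List.map (adjSwap n) ([] : List ℕ)).prod * u.1 ∈ Dmu n r μ := by
      simpa using u.2
    refine ⟨hm, by simp, ?_⟩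
    rw [List.foldr_nil]
    exact congrArg (fun z => Pi.single z (1 : K))
      (Subtype.ext (by simp) : u = (⟨_, hm⟩ : DmuSub n r μ))
  | cons k L' ih =>
    intro hLk u
    have hk : k + 1 < n := hLk k (List.mem_cons_self)
    have hL' : ∀ j ∈ L', j + 1 < n := fun j hj => hLk j (List.mem_cons_of_mem k hj)
    have hassoc : ((k :: L').map (adjSwap n)).prod * u.1 =
        adjSwap n k * ((L'.map (adjSwap n)).prod * u.1) := by
      rw [List.map_cons, List.prod_cons, mul_assoc]
    rcases ih hL' u with h0 | ⟨hmem', hlen', hfold'⟩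
    · left
      simp only [List.foldr_cons, h0, map_zero]
    · simp only [List.foldr_cons]
      rw [hfold', hU k hk ⟨(L'.map (adjSwap n)).prod * u.1, hmem'⟩]
      by_cases hcond : permLen (adjSwap n k * ((L'.map (adjSwap n)).prod * u.1)) =
          permLen ((L'.map (adjSwap n)).prod * u.1) + 1 ∧
          adjSwap n k * ((L'.map (adjSwap n)).prod * u.1) ∈ Dmu n r μ
      · right
        have hmemK : ((k :: L').map (adjSwap n)).prod * u.1 ∈ Dmu n r μ := by
          rw [hassoc]; exact hcond.2
        refine ⟨hmemK, ?_, ?_⟩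
        · rw [hassoc, hcond.1, hlen']
          simp only [List.length_cons]
          omega
        · rw [dif_pos hcond]
          exact congrArg (fun z => Pi.single z (1 : K))
            (Subtype.ext hassoc.symm :
              (⟨_, hcond.2⟩ : DmuSub n r μ) = (⟨_, hmemK⟩ : DmuSub n r μ))
      · left
        rw [dif_neg hcond]

/-- The main computation: applying the reduced word of `λ u₀⁻¹` to `w`. -/
lemma main_fold (hU : IsUFamily K n r μ U)
    {lam : Equiv.Perm (Fin n)} (hlam : lam ∈ Dmu n r μ)
    (hmax : ∀ u ∈ Dmu n r μ, u ≠ lam → permLen u < permLen lam)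
    (w : DmuSub n r μ → K) (u₀ : DmuSub n r μ)
    (hmin : ∀ v : DmuSub n r μ, w v ≠ 0 → permLen u₀.1 ≤ permLen v.1)
    (hc : w u₀ ≠ 0)
    (L : List ℕ) (hLk : ∀ k ∈ L, k + 1 < n)
    (hLprod : (L.map (adjSwap n)).prod = lam * u₀.1⁻¹)
    (hLred : L.length = permLen (lam * u₀.1⁻¹)) :
    L.foldr (fun k v => U k v) w =
      w u₀ • (Pi.single (⟨lam, hlam⟩ : DmuSub n r μ) (1 : K) : DmuSub n r μ → K) := by
  classical
  have hX := lam_cross_inverted hlam hmax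
  have hY := permLen_lam_decomp hlam hX u₀.2
  have hYL : permLen lam = L.length + permLen u₀.1 := by
    rw [hLred]
    exact hY
  have hprodu : (L.map (adjSwap n)).prod * u₀.1 = lam := by
    rw [hLprod, inv_mul_cancel_right]
  have hs : ∀ u : DmuSub n r μ,
      (Pi.single u (w u) : DmuSub n r μ → K) =
        w u • (Pi.single u 1 : DmuSub n r μ → K) := by
    intro u
    funext v
    by_cases h : v = u
    · subst h
      simp
    · simp [Pi.single_apply, h]
  have hw : w = ∑ u : DmuSub n r μ, Pi.single u (w u) := (Finset.univ_sum_single w).symm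
  conv_lhs => rw [hw]
  rw [foldr_sum]
  have hvanish : ∀ u ∈ Finset.univ, u ≠ u₀ →
      L.foldr (fun k v => U k v) (Pi.single u (w u)) = 0 := by
    intro u _ hne
    rw [hs u, foldr_smul]
    by_cases hwu : w u = 0
    · rw [hwu, zero_smul]
    rcases collapse_fold hU L hLk u with h0 | ⟨hmem, hlen, _⟩
    · rw [h0, smul_zero]
    exfalso
    have hge : permLen lam ≤ permLen ((L.map (adjSwap n)).prod * u.1) := by
      rw [hlen]
      have := hmin u hwu
      omega
    by_cases hy : (L.map (adjSwap n)).prod * u.1 = lam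
    · apply hne
      apply Subtype.ext
      have heq : (L.map (adjSwap n)).prod * u.1 = (L.map (adjSwap n)).prod * u₀.1 := by
        rw [hy, hprodu]
      exact mul_left_cancel heq
    · exact absurd (hmax _ hmem hy) (not_lt_of_ge hge)
  rw [Finset.sum_eq_single u₀ hvanish (fun h => absurd (Finset.mem_univ u₀) h)]
  rw [hs u₀, foldr_smul]
  have hclen : clen n r μ ((L.map (adjSwap n)).prod * u₀.1) = clen n r μ u₀.1 + L.length := by
    rw [hprodu, ← permLen_eq_clen hlam, ← permLen_eq_clen u₀.2]
    omega
  obtain ⟨hmem, hlen, hfold⟩ := chain_fold hU L hLk u₀ hclen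
  rw [hfold]
  exact congrArg (fun z => w u₀ • (Pi.single z (1 : K) : DmuSub n r μ → K))
    (Subtype.ext hprodu : (⟨_, hmem⟩ : DmuSub n r μ) = ⟨lam, hlam⟩)

end Ops

/-- the key computation `τ_ω ⬝ m = k_{u₀} τ_λ ⊗ v` in the proof
of Lemma 1.3(iii) of the paper: let `λ` be the unique longest element of
`D_μ`, let `w = ∑ c_u e_u` be a nonzero vector of `V` (a function
`w : DmuSub → K`, with `c_u = w u`), let `u₀` be of minimal length among the
`u` with `c_u ≠ 0`, and let `s_{k₁} ⋯ s_{k_m}` be a reduced expression of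
`ω = λ u₀⁻¹`. Then `U_{k₁} ∘ ⋯ ∘ U_{k_m} (w) = c_{u₀} • e_λ`. In particular,
every nonzero invariant subspace of `V` contains `e_λ`. -/
theorem stmt11 (K : Type*) [Field K] {n r : ℕ} (hn : 1 ≤ n) (μ : ℕ → ℕ)
    (hpos : ∀ t < r, 1 ≤ μ t) (hsum : off μ r = n)
    (U : ℕ → ((DmuSub n r μ → K) →ₗ[K] (DmuSub n r μ → K)))
    (hU : IsUFamily K n r μ U)
    (lam : Equiv.Perm (Fin n)) (hlam : lam ∈ Dmu n r μ)
    (hmax : ∀ u ∈ Dmu n r μ, u ≠ lam → permLen u < permLen lam)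
    (w : DmuSub n r μ → K) (u₀ : DmuSub n r μ) (hc : w u₀ ≠ 0)
    (hmin : ∀ v : DmuSub n r μ, w v ≠ 0 → permLen u₀.1 ≤ permLen v.1)
    (L : List ℕ) (hLk : ∀ k ∈ L, k + 1 < n)
    (hLprod : (L.map (adjSwap n)).prod = lam * u₀.1⁻¹)
    (hLred : L.length = permLen (lam * u₀.1⁻¹)) :
    L.foldr (fun k v => U k v) w =
      w u₀ • (Pi.single (⟨lam, hlam⟩ : DmuSub n r μ) (1 : K) : DmuSub n r μ → K) ∧
    ∀ W : Submodule K (DmuSub n r μ → K),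
      (∀ k, k + 1 < n → ∀ v ∈ W, U k v ∈ W) → W ≠ ⊥ →
      Pi.single (⟨lam, hlam⟩ : DmuSub n r μ) (1 : K) ∈ W := by
  classical
  constructor
  · exact main_fold hU hlam hmax w u₀ hmin hc L hLk hLprod hLred
  · intro W hW hWne
    obtain ⟨w', hw'W, hw'ne⟩ := Submodule.exists_mem_ne_zero_of_ne_bot hWne
    have hsupp : (Finset.univ.filter fun u : DmuSub n r μ => w' u ≠ 0).Nonempty := by
      by_contra h
      apply hw'ne
      funext u
      rw [Finset.not_nonempty_iff_eq_empty, Finset.filter_eq_empty_iff] at h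
      have := h (Finset.mem_univ u)
      simpa using this
    obtain ⟨u₀', hmem', hmin'⟩ :=
      Finset.exists_min_image _ (fun u : DmuSub n r μ => permLen u.1) hsupp
    rw [Finset.mem_filter] at hmem'
    have hc' : w' u₀' ≠ 0 := hmem'.2
    have hmin'' : ∀ v : DmuSub n r μ, w' v ≠ 0 → permLen u₀'.1 ≤ permLen v.1 := by
      intro v hv
      exact hmin' v (by simp [hv])
    obtain ⟨L', hL'k, hL'prod, hL'len⟩ :=
      exists_word (permLen (lam * u₀'.1⁻¹)) (lam * u₀'.1⁻¹) le_rfl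
    have hfold := main_fold hU hlam hmax w' u₀' hmin'' hc' L' hL'k hL'prod hL'len
    have hWin : ∀ L0 : List ℕ, (∀ k ∈ L0, k + 1 < n) →
        L0.foldr (fun k v => U k v) w' ∈ W := by
      intro L0
      induction L0 with
      | nil => intro _; exact hw'W
      | cons k Lt ih =>
        intro hL0
        simp only [List.foldr_cons]
        exact hW k (hL0 k (List.mem_cons_self)) _
          (ih (fun j hj => hL0 j (List.mem_cons_of_mem k hj)))
    have hmemW := hWin L' hL'k
    rw [hfold] at hmemW
    have hsm := Submodule.smul_mem W (w' u₀')⁻¹ hmemW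
    rwa [smul_smul, inv_mul_cancel₀ hc', one_smul] at hsm
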